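/- Under a product probability on a finite product configuration space, define cluster operators C_I by E_I = ∑_{J⊆I} C_J. Then C_I ∘ C_J = C_I if I = J and C_I ∘ C_J = 0 if I ≠ J. -/

import Mathlib

/-- `Depends f I` : the configuration function `f` depends only on the sites in `I`. -/
def Depends {S : Type*} {Sps : S → Type*} (f : (∀ i, Sps i) → ℂ) (I : Finset S) : Prop :=
  ∀ x y : ∀ i, Sps i, (∀ i ∈ I, x i = y i) → f x = f y

section Aux

variable {S : Type*} [Fintype S] [DecidableEq S] {Sps : S → Type*} [∀ i, Fintype (Sps i)]

/-- combine `x` on `I` with `y` off `I`. -/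
def comb (I : Finset S) (x y : ∀ i, Sps i) : ∀ i, Sps i := fun i => if i ∈ I then x i else y i

lemma comb_comb (T : Finset S) (y z : ∀ i, Sps i) :
    comb T (comb T y z) (comb T z y) = y := by
  funext i; by_cases h : i ∈ T <;> simp [comb, h]

/-- swap the coordinates off `T` between the two components. -/
def swapE (T : Finset S) : ((∀ i, Sps i) × (∀ i, Sps i)) ≃ ((∀ i, Sps i) × (∀ i, Sps i)) where
  toFun p := (comb T p.1 p.2, comb T p.2 p.1)
  invFun p := (comb T p.1 p.2, comb T p.2 p.1)
  left_inv p := by cases p; simp [comb_comb]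
  right_inv p := by cases p; simp [comb_comb]

variable (p : ∀ i, Sps i → ℝ)

/-- complex product weight -/
def wC (x : ∀ i, Sps i) : ℂ := ∏ i, (p i (x i) : ℂ)

lemma wC_swap (T : Finset S) (y z : ∀ i, Sps i) :
    wC p (comb T y z) * wC p (comb T z y) = wC p y * wC p z := by
  unfold wC
  rw [← Finset.prod_mul_distrib, ← Finset.prod_mul_distrib]
  refine Finset.prod_congr rfl fun i _ => ?_
  by_cases h : i ∈ T <;> simp [comb, h, mul_comm]

lemma sum_wC (hsum : ∀ i, ∑ s, p i s = 1) : ∑ x : ∀ i, Sps i, wC p x = 1 := by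
  have h := Finset.prod_univ_sum (fun i : S => (Finset.univ : Finset (Sps i)))
      (fun i s => ((p i s : ℝ) : ℂ))
  rw [Fintype.piFinset_univ] at h
  unfold wC
  rw [← h]
  refine Finset.prod_eq_one fun i _ => ?_
  rw [← Complex.ofReal_sum, hsum i, Complex.ofReal_one]

lemma comb_assoc (I J : Finset S) (x y z : ∀ i, Sps i) :
    comb J (comb I x y) z = comb (I ∩ J) x (comb J y z) := by
  funext i
  by_cases hJ : i ∈ J <;> by_cases hI : i ∈ I <;> simp [comb, hI, hJ]

/-- Any operator with the three properties is given by the explicit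
conditional expectation formula. -/
lemma E_repr
    (hp : ∀ i s, 0 < p i s) (hsum : ∀ i, ∑ s, p i s = 1)
    (E : Finset S → (((∀ i, Sps i) → ℂ) →ₗ[ℂ] ((∀ i, Sps i) → ℂ)))
    (hrange : ∀ I f, Depends (E I f) I)
    (hfix : ∀ I f, Depends f I → E I f = f)
    (hadj : ∀ (I : Finset S) (f g : (∀ i, Sps i) → ℂ),
      ∑ x, wC p x * (starRingEnd ℂ) ((E I f) x) * g x
        = ∑ x, wC p x * (starRingEnd ℂ) (f x) * (E I g) x)
    (I : Finset S) (f : (∀ i, Sps i) → ℂ) :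
    E I f = fun x => ∑ y, wC p y * f (comb I x y) := by
  set A : (∀ i, Sps i) → ℂ := fun x => ∑ y, wC p y * f (comb I x y) with hA
  have hA_dep : Depends A I := by
    intro x x' h
    refine Finset.sum_congr rfl fun y _ => ?_
    congr 2
    funext i
    by_cases hi : i ∈ I
    · simp [comb, hi, h i hi]
    · simp [comb, hi]
  have hA_inner : ∀ g, Depends g I →
      ∑ x, wC p x * (starRingEnd ℂ) (g x) * A x
        = ∑ x, wC p x * (starRingEnd ℂ) (g x) * f x := by
    intro g hg
    have h1 : ∑ x, wC p x * (starRingEnd ℂ) (g x) * A x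
        = ∑ q : (∀ i, Sps i) × (∀ i, Sps i),
            wC p q.1 * wC p q.2 * (starRingEnd ℂ) (g q.1) * f (comb I q.1 q.2) := by
      rw [Fintype.sum_prod_type]
      refine Finset.sum_congr rfl fun x _ => ?_
      rw [hA, Finset.mul_sum]
      exact Finset.sum_congr rfl fun y _ => by ring
    have h2 : ∀ q : (∀ i, Sps i) × (∀ i, Sps i),
        (fun q : (∀ i, Sps i) × (∀ i, Sps i) =>
          wC p q.1 * wC p q.2 * (starRingEnd ℂ) (g q.1) * f (comb I q.1 q.2)) (swapE I q)
        = wC p q.1 * wC p q.2 * (starRingEnd ℂ) (g q.1) * f q.1 := by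
      rintro ⟨x, y⟩
      simp only [swapE, Equiv.coe_fn_mk]
      rw [comb_comb]
      have hg' : g (comb I x y) = g x := by
        refine hg _ _ fun i hi => ?_
        simp [comb, hi]
      rw [hg']
      have := wC_swap p I x y
      calc wC p (comb I x y) * wC p (comb I y x) * (starRingEnd ℂ) (g x) * f x
          = (wC p (comb I x y) * wC p (comb I y x)) * ((starRingEnd ℂ) (g x) * f x) := by ring
        _ = (wC p x * wC p y) * ((starRingEnd ℂ) (g x) * f x) := by rw [this]
        _ = wC p x * wC p y * (starRingEnd ℂ) (g x) * f x := by ring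
    calc ∑ x, wC p x * (starRingEnd ℂ) (g x) * A x
        = ∑ q : (∀ i, Sps i) × (∀ i, Sps i),
            wC p q.1 * wC p q.2 * (starRingEnd ℂ) (g q.1) * f (comb I q.1 q.2) := h1
      _ = ∑ q : (∀ i, Sps i) × (∀ i, Sps i),
            (fun q : (∀ i, Sps i) × (∀ i, Sps i) =>
              wC p q.1 * wC p q.2 * (starRingEnd ℂ) (g q.1) * f (comb I q.1 q.2)) (swapE I q) :=
          (Equiv.sum_comp (swapE I)
            (fun q : ((i : S) → Sps i) × ((i : S) → Sps i) =>
              wC p q.1 * wC p q.2 * (starRingEnd ℂ) (g q.1) * f (comb I q.1 q.2))).symm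
      _ = ∑ q : (∀ i, Sps i) × (∀ i, Sps i),
            wC p q.1 * wC p q.2 * (starRingEnd ℂ) (g q.1) * f q.1 :=
          Finset.sum_congr rfl fun q _ => h2 q
      _ = ∑ x, wC p x * (starRingEnd ℂ) (g x) * f x := by
          rw [Fintype.sum_prod_type]
          refine Finset.sum_congr rfl fun x _ => ?_
          calc ∑ y, wC p x * wC p y * (starRingEnd ℂ) (g x) * f x
              = ∑ y : ∀ i, Sps i, wC p y * (wC p x * (starRingEnd ℂ) (g x) * f x) :=
                Finset.sum_congr rfl fun y _ => by ring
            _ = (∑ y : ∀ i, Sps i, wC p y) * (wC p x * (starRingEnd ℂ) (g x) * f x) :=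
                (Finset.sum_mul _ _ _).symm
            _ = wC p x * (starRingEnd ℂ) (g x) * f x := by rw [sum_wC p hsum, one_mul]
  have hE_inner : ∀ g, Depends g I →
      ∑ x, wC p x * (starRingEnd ℂ) (g x) * (E I f) x
        = ∑ x, wC p x * (starRingEnd ℂ) (g x) * f x := by
    intro g hg
    have h := hadj I g f
    rw [hfix I g hg] at h
    exact h.symm
  have hd_dep : Depends (fun x => E I f x - A x) I := by
    intro x y h
    simp only
    rw [hrange I f x y h, hA_dep x y h]
  have hzero : ∑ x, wC p x * (starRingEnd ℂ) (E I f x - A x) * (E I f x - A x) = 0 := by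
    have h1 := hE_inner _ hd_dep
    have h2 := hA_inner _ hd_dep
    calc ∑ x, wC p x * (starRingEnd ℂ) (E I f x - A x) * (E I f x - A x)
        = (∑ x, wC p x * (starRingEnd ℂ) (E I f x - A x) * E I f x)
            - ∑ x, wC p x * (starRingEnd ℂ) (E I f x - A x) * A x := by
          rw [← Finset.sum_sub_distrib]
          exact Finset.sum_congr rfl fun x _ => by ring
      _ = 0 := by rw [h1, h2, sub_self]
  have hre : ∑ x : ∀ i, Sps i, (∏ i, p i (x i)) * Complex.normSq (E I f x - A x) = 0 := by
    have hc : ((∑ x : ∀ i, Sps i, (∏ i, p i (x i)) * Complex.normSq (E I f x - A x) : ℝ) : ℂ)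
        = 0 := by
      rw [← hzero]
      push_cast
      refine Finset.sum_congr rfl fun x _ => ?_
      rw [mul_assoc, mul_comm ((starRingEnd ℂ) _), Complex.mul_conj]
      simp [wC]
    exact_mod_cast hc
  have hterm := (Finset.sum_eq_zero_iff_of_nonneg (fun x _ =>
      mul_nonneg (Finset.prod_nonneg fun i _ => (hp i (x i)).le)
        (Complex.normSq_nonneg _))).mp hre
  funext x
  have h0 : (∏ i, p i (x i)) * Complex.normSq (E I f x - A x) = 0 :=
    hterm x (Finset.mem_univ x)
  have hpos : (0:ℝ) < ∏ i, p i (x i) := Finset.prod_pos fun i _ => hp i (x i)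
  have : Complex.normSq (E I f x - A x) = 0 := by
    rcases mul_eq_zero.mp h0 with h | h
    · exact absurd h hpos.ne'
    · exact h
  have := Complex.normSq_eq_zero.mp this
  have := sub_eq_zero.mp this
  simpa [hA] using this

end Aux

theorem cluster_operators_orthogonal_idempotent {S : Type*} [Fintype S] [DecidableEq S]
    {Sps : S → Type*} [∀ i, Fintype (Sps i)]
    (p : ∀ i, Sps i → ℝ) (hp : ∀ i s, 0 < p i s) (hsum : ∀ i, ∑ s, p i s = 1)
    (E : Finset S → (((∀ i, Sps i) → ℂ) →ₗ[ℂ] ((∀ i, Sps i) → ℂ)))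
    (hrange : ∀ I f, Depends (E I f) I)
    (hfix : ∀ I f, Depends f I → E I f = f)
    (hadj : ∀ (I : Finset S) (f g : (∀ i, Sps i) → ℂ),
      ∑ x, (∏ i, (p i (x i) : ℂ)) * (starRingEnd ℂ) ((E I f) x) * g x
        = ∑ x, (∏ i, (p i (x i) : ℂ)) * (starRingEnd ℂ) (f x) * (E I g) x)
    (C : Finset S → (((∀ i, Sps i) → ℂ) →ₗ[ℂ] ((∀ i, Sps i) → ℂ)))
    (hEC : ∀ I : Finset S, E I = ∑ J ∈ I.powerset, C J) :
    ∀ I J : Finset S, (C I) ∘ₗ (C J) = if I = J then C I else 0 := by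
  have hadj' : ∀ (I : Finset S) (f g : (∀ i, Sps i) → ℂ),
      ∑ x, wC p x * (starRingEnd ℂ) ((E I f) x) * g x
        = ∑ x, wC p x * (starRingEnd ℂ) (f x) * (E I g) x := by
    intro I f g; simpa [wC] using hadj I f g
  have hrepr := E_repr p hp hsum E hrange hfix hadj'
  -- the semigroup property
  have hEE : ∀ (I J : Finset S) (f : (∀ i, Sps i) → ℂ), E I (E J f) = E (I ∩ J) f := by
    intro I J f
    rw [hrepr I (E J f), hrepr (I ∩ J) f]
    funext x
    have hin : ∀ y, E J f (comb I x y) = ∑ z, wC p z * f (comb J (comb I x y) z) := by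
      intro y; rw [hrepr J f]
    calc ∑ y, wC p y * E J f (comb I x y)
        = ∑ y, ∑ z, wC p y * wC p z * f (comb (I ∩ J) x (comb J y z)) := by
          refine Finset.sum_congr rfl fun y _ => ?_
          rw [hin y, Finset.mul_sum]
          refine Finset.sum_congr rfl fun z _ => ?_
          rw [comb_assoc]; ring
      _ = ∑ q : (∀ i, Sps i) × (∀ i, Sps i),
            wC p q.1 * wC p q.2 * f (comb (I ∩ J) x (comb J q.1 q.2)) := by
          rw [Fintype.sum_prod_type]
      _ = ∑ q : (∀ i, Sps i) × (∀ i, Sps i),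
            (fun q : (∀ i, Sps i) × (∀ i, Sps i) =>
              wC p q.1 * wC p q.2 * f (comb (I ∩ J) x q.1)) (swapE J q) := by
          refine Finset.sum_congr rfl fun ⟨y, z⟩ _ => ?_
          simp only [swapE, Equiv.coe_fn_mk]
          rw [wC_swap]
      _ = ∑ q : (∀ i, Sps i) × (∀ i, Sps i),
            wC p q.1 * wC p q.2 * f (comb (I ∩ J) x q.1) :=
          Equiv.sum_comp (swapE J)
            (fun q : ((i : S) → Sps i) × ((i : S) → Sps i) =>
              wC p q.1 * wC p q.2 * f (comb (I ∩ J) x q.1))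
      _ = ∑ y, wC p y * f (comb (I ∩ J) x y) := by
          rw [Fintype.sum_prod_type]
          refine Finset.sum_congr rfl fun y _ => ?_
          calc ∑ z, wC p y * wC p z * f (comb (I ∩ J) x y)
              = ∑ z : ∀ i, Sps i, wC p z * (wC p y * f (comb (I ∩ J) x y)) :=
                Finset.sum_congr rfl fun z _ => by ring
            _ = (∑ z : ∀ i, Sps i, wC p z) * (wC p y * f (comb (I ∩ J) x y)) :=
                (Finset.sum_mul _ _ _).symm
            _ = wC p y * f (comb (I ∩ J) x y) := by rw [sum_wC p hsum, one_mul]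
  -- recursion for C
  have hCrec : ∀ (J : Finset S) (f : (∀ i, Sps i) → ℂ),
      C J f = E J f - ∑ J' ∈ J.powerset.erase J, C J' f := by
    intro J f
    rw [hEC J]
    rw [LinearMap.coe_sum, Finset.sum_apply,
      ← Finset.sum_erase_add _ _ (Finset.mem_powerset_self J)]
    abel
  -- E K ∘ C J
  have L1 : ∀ (J K : Finset S) (f : (∀ i, Sps i) → ℂ),
      E K (C J f) = if J ⊆ K then C J f else 0 := by
    intro J
    induction J using Finset.strongInduction with
    | _ J ih =>
      intro K f
      rw [hCrec J f, map_sub, map_sum, hEE K J f, hEC (K ∩ J), LinearMap.coe_sum,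
        Finset.sum_apply]
      have hsum2 : ∑ J' ∈ J.powerset.erase J, E K (C J' f)
          = ∑ J' ∈ J.powerset.erase J, (if J' ⊆ K then C J' f else 0) := by
        refine Finset.sum_congr rfl fun J' hJ' => ?_
        have hss : J' ⊂ J := by
          rw [Finset.mem_erase, Finset.mem_powerset] at hJ'
          exact lt_of_le_of_ne hJ'.2 hJ'.1
        exact ih J' hss K f
      rw [hsum2]
      by_cases hJK : J ⊆ K
      · rw [if_pos hJK, Finset.inter_eq_right.mpr hJK]
        have : ∑ J' ∈ J.powerset.erase J, (if J' ⊆ K then C J' f else 0)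
            = ∑ J' ∈ J.powerset.erase J, C J' f := by
          refine Finset.sum_congr rfl fun J' hJ' => ?_
          rw [Finset.mem_erase, Finset.mem_powerset] at hJ'
          exact if_pos (hJ'.2.trans hJK)
        rw [this, ← Finset.sum_erase_add _ _ (Finset.mem_powerset_self J), hCrec J f]
        abel
      · rw [if_neg hJK]
        have hps : (K ∩ J).powerset = (J.powerset.erase J).filter (· ⊆ K) := by
          ext L
          simp only [Finset.mem_powerset, Finset.mem_filter, Finset.mem_erase,
            Finset.subset_inter_iff]
          constructor
          · rintro ⟨hK, hJ'⟩
            exact ⟨⟨fun h => hJK (h ▸ hK), hJ'⟩, hK⟩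
          · rintro ⟨⟨_, hJ'⟩, hK⟩; exact ⟨hK, hJ'⟩
        rw [hps, ← Finset.sum_filter]
        exact sub_self _
  -- main claim
  intro I J
  induction I using Finset.strongInduction with
  | _ I ih =>
    apply LinearMap.ext; intro f
    simp only [LinearMap.comp_apply]
    have hstep : C I (C J f)
        = (if J ⊆ I then C J f else 0)
            - (if J ∈ I.powerset.erase I then C J f else 0) := by
      rw [hCrec I (C J f), L1 J I f]
      congr 1
      have : ∑ I' ∈ I.powerset.erase I, C I' (C J f)
          = ∑ I' ∈ I.powerset.erase I, (if I' = J then C I' f else 0) := by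
        refine Finset.sum_congr rfl fun I' hI' => ?_
        have hss : I' ⊂ I := by
          rw [Finset.mem_erase, Finset.mem_powerset] at hI'
          exact lt_of_le_of_ne hI'.2 hI'.1
        have h := LinearMap.congr_fun (ih I' hss) f
        simp only [LinearMap.comp_apply] at h
        rw [h]
        by_cases hIJ : I' = J <;> simp [hIJ]
      rw [this, Finset.sum_ite_eq']
    rw [hstep]
    by_cases hIJ : I = J
    · subst hIJ
      have h1 : (I:Finset S) ⊆ I := le_refl I
      have h2 : I ∉ I.powerset.erase I := fun h => (Finset.mem_erase.mp h).1 rfl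
      rw [if_pos h1, if_neg h2, if_pos rfl, sub_zero]
    · rw [if_neg hIJ]
      by_cases hJI : J ⊆ I
      · have h2 : J ∈ I.powerset.erase I := by
          rw [Finset.mem_erase, Finset.mem_powerset]
          exact ⟨fun h => hIJ h.symm, hJI⟩
        rw [if_pos hJI, if_pos h2, sub_self]
        simp
      · have h2 : J ∉ I.powerset.erase I := by
          rw [Finset.mem_erase, Finset.mem_powerset]
          exact fun h => hJI h.2
        rw [if_neg hJI, if_neg h2, sub_self]
        simp
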